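/- Let X be a measurable space, σ : X → X a measurable surjection, and λ a σ-finite measure on X such that Measure.map σ λ and λ are mutually absolutely continuous; let θ_λ denote the Radon–Nikodym derivative of Measure.map σ λ with respect to λ, and let R_λ be the Frobenius–Perron transfer operator of λ. Then the following are equivalent: (i) R_λ admits a σ⁻¹(B)-measurable harmonic function, i.e. there exists a measurable q : X → [0, ∞) with q > 0 λ-almost everywhere such that R_λ (q ∘ σ) = q ∘ σ λ-almost everywhere; (ii) θ_λ is a σ-coboundary, i.e. there exists a measurable q : X → [0, ∞) with q > 0 λ-almost everywhere such that θ_λ · q = q ∘ σ λ-almost everywhere. -/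
import Mathlib

open MeasureTheory
open scoped ENNReal

lemma key_rnDeriv {X : Type*} [MeasurableSpace X] (σ : X → X) (hσ : Measurable σ)
    (lam : Measure X) [SigmaFinite lam]
    (hac : Measure.map σ lam ≪ lam) (q : X → NNReal) (hq : Measurable q) :
    (Measure.map σ (lam.withDensity fun x => (q (σ x) : ℝ≥0∞))).rnDeriv lam
      =ᵐ[lam] fun x => (Measure.map σ lam).rnDeriv lam x * (q x : ℝ≥0∞) := by
  have hqm : Measurable fun x => (q x : ℝ≥0∞) := measurable_coe_nnreal_ennreal.comp hq
  have h1 : Measure.map σ (lam.withDensity fun x => (q (σ x) : ℝ≥0∞))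
      = (Measure.map σ lam).withDensity fun x => (q x : ℝ≥0∞) := by
    ext s hs
    rw [Measure.map_apply hσ hs, withDensity_apply _ (hσ hs), withDensity_apply _ hs,
      ← setLIntegral_map hs hqm hσ]
  have h2 : (Measure.map σ lam).withDensity (fun x => (q x : ℝ≥0∞))
      = lam.withDensity fun x => (Measure.map σ lam).rnDeriv lam x * (q x : ℝ≥0∞) := by
    rw [show (fun x => (Measure.map σ lam).rnDeriv lam x * (q x : ℝ≥0∞))
        = (Measure.map σ lam).rnDeriv lam * (fun x => (q x : ℝ≥0∞)) from rfl,
      withDensity_mul lam (Measure.measurable_rnDeriv _ _) hqm,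
      Measure.withDensity_rnDeriv_eq _ _ hac]
  rw [h1, h2]
  exact Measure.rnDeriv_withDensity lam ((Measure.measurable_rnDeriv _ _).mul hqm)

theorem stmt_14 {X : Type*} [MeasurableSpace X] (σ : X → X) (hσ : Measurable σ)
    (hσsurj : Function.Surjective σ)
    (lam : Measure X) [SigmaFinite lam]
    (hac : Measure.map σ lam ≪ lam) (hac' : lam ≪ Measure.map σ lam) :
    (∃ q : X → NNReal, Measurable q ∧ (∀ᵐ x ∂lam, 0 < q x) ∧
      (Measure.map σ (lam.withDensity fun x => (q (σ x) : ℝ≥0∞))).rnDeriv lam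
        =ᵐ[lam] fun x => (q (σ x) : ℝ≥0∞)) ↔
    (∃ q : X → NNReal, Measurable q ∧ (∀ᵐ x ∂lam, 0 < q x) ∧
      (fun x => (Measure.map σ lam).rnDeriv lam x * (q x : ℝ≥0∞)) =ᵐ[lam]
        fun x => (q (σ x) : ℝ≥0∞)) := by
  constructor
  · rintro ⟨q, hq, hpos, heq⟩
    exact ⟨q, hq, hpos, (key_rnDeriv σ hσ lam hac q hq).symm.trans heq⟩
  · rintro ⟨q, hq, hpos, heq⟩
    exact ⟨q, hq, hpos, (key_rnDeriv σ hσ lam hac q hq).trans heq⟩
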